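/- arXiv:2503.22443 — 3 statements merged into one kernel-verified Lean document; each statement's English description precedes it below -/
import Mathlib

section
/- Let F, G : ℂ → ℂ be entire functions (differentiable on all of ℂ) that map ℝ into ℝ. If there exist real numbers a < b such that |F(x)| = |G(x)| for all x ∈ (a, b), then F = G on ℂ or F = −G on ℂ. -/
open Filter Topology

/-- Identity theorem helper: an entire function vanishing frequently near a point is zero. -/
lemma entire_eq_zero_of_frequently {f : ℂ → ℂ} (hf : Differentiable ℂ f) (c : ℂ)
    (h : ∃ᶠ z in 𝓝[≠] c, f z = 0) : f = 0 := by
  have hA : AnalyticOnNhd ℂ f Set.univ := hf.differentiableOn.analyticOnNhd isOpen_univ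
  have := hA.eqOn_zero_of_preconnected_of_frequently_eq_zero isPreconnected_univ
    (Set.mem_univ c) h
  funext z
  exact this (Set.mem_univ z)

/-- **Entire sign retrieval.** If `F, G : ℂ → ℂ` are entire functions that are real-valued
on the real axis and `|F| = |G|` on some nonempty open real interval `(a, b)`,
then `F = G` or `F = -G` on all of `ℂ`. -/
theorem entire_sign_retrieval (F G : ℂ → ℂ)
    (hF : Differentiable ℂ F) (hG : Differentiable ℂ G)
    (hFreal : ∀ x : ℝ, (F x).im = 0) (hGreal : ∀ x : ℝ, (G x).im = 0)
    (a b : ℝ) (hab : a < b)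
    (habs : ∀ x : ℝ, x ∈ Set.Ioo a b → ‖F x‖ = ‖G x‖) :
    F = G ∨ F = -G := by
  -- on (a,b), F x ^ 2 = G x ^ 2
  have hsq : ∀ x : ℝ, x ∈ Set.Ioo a b → F x ^ 2 = G x ^ 2 := by
    intro x hx
    have hFx : F x = ((F x).re : ℂ) := Complex.ext rfl (by simp [hFreal x])
    have hGx : G x = ((G x).re : ℂ) := Complex.ext rfl (by simp [hGreal x])
    have habs' := habs x hx
    rw [hFx, hGx, Complex.norm_real, Complex.norm_real, Real.norm_eq_abs, Real.norm_eq_abs] at habs'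
    have : (F x).re ^ 2 = (G x).re ^ 2 := by
      rw [← sq_abs ((F x).re), ← sq_abs ((G x).re), habs']
    rw [hFx, hGx]
    exact_mod_cast congrArg (fun r : ℝ => (r : ℂ)) this
  -- a sequence of reals in (a,b) tending to the midpoint within 𝓝[≠]
  set c : ℝ := (a + b) / 2 with hc
  have hca : a < c := by simp [hc]; linarith
  have hcb : c < b := by simp [hc]; linarith
  have hu : Tendsto (fun n : ℕ => ((c + (b - c) / (n + 2) : ℝ) : ℂ)) atTop (𝓝[≠] (c : ℂ)) := by
    rw [tendsto_nhdsWithin_iff]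
    constructor
    · have h1 : Tendsto (fun n : ℕ => (c + (b - c) / (n + 2) : ℝ)) atTop (𝓝 c) := by
        have := tendsto_natCast_atTop_atTop (R := ℝ)
        have h2 : Tendsto (fun n : ℕ => ((n : ℝ) + 2)) atTop atTop :=
          this.atTop_add tendsto_const_nhds
        have h3 : Tendsto (fun n : ℕ => (b - c) / ((n : ℝ) + 2)) atTop (𝓝 0) :=
          Tendsto.div_atTop tendsto_const_nhds h2
        simpa using tendsto_const_nhds.add h3
      exact (Complex.continuous_ofReal.tendsto c).comp h1
    · filter_upwards with n
      simp only [Set.mem_compl_iff, Set.mem_singleton_iff]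
      intro h
      have h' : c + (b - c) / (n + 2 : ℝ) = c := by exact_mod_cast h
      have hbc : (0 : ℝ) < b - c := by linarith
      have hpos : (0 : ℝ) < (b - c) / ((n:ℝ) + 2) := div_pos hbc (by positivity)
      linarith
  have hmem : ∀ n : ℕ, (c + (b - c) / (n + 2) : ℝ) ∈ Set.Ioo a b := by
    intro n
    have hbc : (0 : ℝ) < b - c := by linarith
    have hn2 : (1 : ℝ) < (n : ℝ) + 2 := by have := Nat.cast_nonneg (α := ℝ) n; linarith
    have hpos : (0 : ℝ) < (b - c) / (n + 2) := div_pos hbc (by linarith)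
    have hlt : (b - c) / ((n : ℝ) + 2) < b - c := div_lt_self hbc hn2
    exact ⟨by linarith, by linarith⟩
  -- F² = G² everywhere
  have hH : (fun z => F z ^ 2 - G z ^ 2) = 0 := by
    apply entire_eq_zero_of_frequently ((hF.pow 2).sub (hG.pow 2)) (c : ℂ)
    apply hu.frequently
    refine Filter.Frequently.of_forall fun n => ?_
    have h := hsq _ (hmem n)
    push_cast at h ⊢
    simp only [Pi.sub_apply, Pi.pow_apply]
    linear_combination h
  have hsq' : ∀ z : ℂ, F z ^ 2 = G z ^ 2 := by
    intro z
    have := congrFun hH z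
    simp at this
    linear_combination this
  by_cases hFG : F = G
  · exact Or.inl hFG
  · right
    -- there is a point where F ≠ G; near it F - G ≠ 0, so F + G = 0 there
    have hne : ∃ z₀, F z₀ - G z₀ ≠ 0 := by
      by_contra h
      push_neg at h
      exact hFG (funext fun z => sub_eq_zero.mp (h z))
    obtain ⟨z₀, hz₀⟩ := hne
    have hcont : ContinuousAt (fun z => F z - G z) z₀ := ((hF.continuous.sub hG.continuous)).continuousAt
    have hnhds : ∀ᶠ z in 𝓝 z₀, F z - G z ≠ 0 :=
      hcont.eventually_ne hz₀
    have hplus : ∀ᶠ z in 𝓝 z₀, F z + G z = 0 := by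
      filter_upwards [hnhds] with z hz
      have hmul : (F z - G z) * (F z + G z) = 0 := by
        have := hsq' z; ring_nf; linear_combination this
      rcases mul_eq_zero.mp hmul with h | h
      · exact absurd h hz
      · exact h
    have hfreq : ∃ᶠ z in 𝓝[≠] z₀, F z + G z = 0 :=
      (hplus.filter_mono nhdsWithin_le_nhds).frequently
    have := entire_eq_zero_of_frequently (f := fun z => F z + G z) (hF.add hG) z₀ hfreq
    funext z
    have hz := congrFun this z
    simp at hz
    simp [Pi.neg_apply]
    linear_combination hz
end

section
/- For every j ∈ {0,…,N} and every real ζ, the determinant a_j^+(ζ) b_j^−(ζ) − a_j^−(ζ) b_j^+(ζ) of the matrix with columns A_j^+(ζ) and A_j^−(ζ) is nonzero. -/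
/-- The transfer matrix `L_j(ζ)` at the jump point `x_j`, for the piecewise constant
bandwidth parameters `q_{j-1}, q_j`. -/
noncomputable def Lmat (xs q : ℕ → ℝ) (j : ℕ) (ζ : ℂ) : Matrix (Fin 2) (Fin 2) ℂ :=
  !![(1 + (q j : ℂ) / (q (j - 1) : ℂ)) *
        Complex.exp (Complex.I * (xs j : ℂ) * ((q j : ℂ) - (q (j - 1) : ℂ)) * ζ),
     (1 - (q j : ℂ) / (q (j - 1) : ℂ)) *
        Complex.exp (-(Complex.I * (xs j : ℂ) * ((q j : ℂ) + (q (j - 1) : ℂ)) * ζ));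
     (1 - (q j : ℂ) / (q (j - 1) : ℂ)) *
        Complex.exp (Complex.I * (xs j : ℂ) * ((q j : ℂ) + (q (j - 1) : ℂ)) * ζ),
     (1 + (q j : ℂ) / (q (j - 1) : ℂ)) *
        Complex.exp (-(Complex.I * (xs j : ℂ) * ((q j : ℂ) - (q (j - 1) : ℂ)) * ζ))]

/-- The vectors `A_j^-(ζ) = (a_j^-(ζ), b_j^-(ζ))`, defined by `A_0^- = (0, 1)` and
`A_j^- = (1/2) L_j(ζ) A_{j-1}^-`. -/
noncomputable def Aminus (xs q : ℕ → ℝ) : ℕ → ℝ → Fin 2 → ℂ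
  | 0 => fun _ => ![0, 1]
  | (j + 1) => fun ζ => (2 : ℂ)⁻¹ • (Lmat xs q (j + 1) ζ).mulVec (Aminus xs q j ζ)

/-- Auxiliary downward recursion for `A_j^+`: `AplusAux xs q N k ζ = A_{N-k}^+(ζ)`. -/
noncomputable def AplusAux (xs q : ℕ → ℝ) (N : ℕ) : ℕ → ℝ → Fin 2 → ℂ
  | 0 => fun _ => ![1, 0]
  | (k + 1) => fun ζ => (2 : ℂ) • ((Lmat xs q (N - k) ζ)⁻¹).mulVec (AplusAux xs q N k ζ)

/-- The vectors `A_j^+(ζ) = (a_j^+(ζ), b_j^+(ζ))`, defined by `A_N^+ = (1, 0)` and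
`A_{j-1}^+ = 2 L_j(ζ)⁻¹ A_j^+`. -/
noncomputable def Aplus (xs q : ℕ → ℝ) (N j : ℕ) (ζ : ℝ) : Fin 2 → ℂ :=
  AplusAux xs q N (N - j) ζ

lemma Lmat_entry_det (xs q : ℕ → ℝ) (j : ℕ) (ζ : ℂ) :
    Lmat xs q j ζ 0 0 * Lmat xs q j ζ 1 1 - Lmat xs q j ζ 0 1 * Lmat xs q j ζ 1 0
      = 4 * ((q j : ℂ) / (q (j - 1) : ℂ)) := by
  simp only [Lmat, Matrix.cons_val', Matrix.cons_val_zero, Matrix.cons_val_one,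
    Matrix.head_cons, Matrix.empty_val', Matrix.cons_val_fin_one, Matrix.head_fin_const,
    Matrix.of_apply]
  have h1 : Complex.exp (Complex.I * (xs j : ℂ) * ((q j : ℂ) - (q (j - 1) : ℂ)) * ζ) *
      Complex.exp (-(Complex.I * (xs j : ℂ) * ((q j : ℂ) - (q (j - 1) : ℂ)) * ζ)) = 1 := by
    rw [← Complex.exp_add]; simp
  have h2 : Complex.exp (-(Complex.I * (xs j : ℂ) * ((q j : ℂ) + (q (j - 1) : ℂ)) * ζ)) *
      Complex.exp (Complex.I * (xs j : ℂ) * ((q j : ℂ) + (q (j - 1) : ℂ)) * ζ) = 1 := by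
    rw [← Complex.exp_add]; simp
  linear_combination (1 + (q j : ℂ) / (q (j - 1) : ℂ))^2 * h1
    - (1 - (q j : ℂ) / (q (j - 1) : ℂ))^2 * h2
lemma Lmat_det (xs q : ℕ → ℝ) (j : ℕ) (ζ : ℂ) :
    (Lmat xs q j ζ).det = 4 * ((q j : ℂ) / (q (j - 1) : ℂ)) := by
  rw [Matrix.det_fin_two]; exact Lmat_entry_det xs q j ζ
lemma Lmat_conj00 (xs q : ℕ → ℝ) (j : ℕ) (ζ : ℝ) :
    (starRingEnd ℂ) (Lmat xs q j ζ 0 0) = Lmat xs q j ζ 1 1 := by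
  simp only [Lmat, Matrix.cons_val', Matrix.cons_val_zero, Matrix.cons_val_one,
    Matrix.head_cons, Matrix.empty_val', Matrix.cons_val_fin_one, Matrix.head_fin_const,
    Matrix.of_apply]
  rw [map_mul, ← Complex.exp_conj]
  simp [map_add, map_sub, map_mul, map_div₀, Complex.conj_ofReal, Complex.conj_I]
lemma Lmat_conj01 (xs q : ℕ → ℝ) (j : ℕ) (ζ : ℝ) :
    (starRingEnd ℂ) (Lmat xs q j ζ 0 1) = Lmat xs q j ζ 1 0 := by
  simp only [Lmat, Matrix.cons_val', Matrix.cons_val_zero, Matrix.cons_val_one,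
    Matrix.head_cons, Matrix.empty_val', Matrix.cons_val_fin_one, Matrix.head_fin_const,
    Matrix.of_apply]
  rw [map_mul, ← Complex.exp_conj]
  simp [map_add, map_sub, map_mul, map_div₀, Complex.conj_ofReal, Complex.conj_I]
lemma Aminus_norm (xs q : ℕ → ℝ) (N : ℕ) (hq : ∀ j : ℕ, j ≤ N → 0 < q j) (ζ : ℝ) :
    ∀ j : ℕ, j ≤ N →
      (starRingEnd ℂ) (Aminus xs q j ζ 1) * Aminus xs q j ζ 1
        - (starRingEnd ℂ) (Aminus xs q j ζ 0) * Aminus xs q j ζ 0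
      = ((q j / q 0 : ℝ) : ℂ) := by
  intro j
  induction j with
  | zero =>
    intro h0
    have : q 0 ≠ 0 := (hq 0 h0).ne'
    simp [Aminus, this]
  | succ j ih =>
    intro hj1
    have hj : j ≤ N := Nat.le_of_succ_le hj1
    have h0 : (q 0 : ℂ) ≠ 0 := Complex.ofReal_ne_zero.mpr (hq 0 (Nat.zero_le N)).ne'
    have hqj : (q j : ℂ) ≠ 0 := Complex.ofReal_ne_zero.mpr (hq j hj).ne'
    have hdet := Lmat_entry_det xs q (j + 1) (ζ : ℂ)
    rw [Nat.add_sub_cancel] at hdet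
    have hc00 := Lmat_conj00 xs q (j + 1) ζ
    have hc01 := Lmat_conj01 xs q (j + 1) ζ
    have hc11 : (starRingEnd ℂ) (Lmat xs q (j+1) ζ 1 1) = Lmat xs q (j+1) ζ 0 0 := by
      rw [← hc00, Complex.conj_conj]
    have hc10 : (starRingEnd ℂ) (Lmat xs q (j+1) ζ 1 0) = Lmat xs q (j+1) ζ 0 1 := by
      rw [← hc01, Complex.conj_conj]
    have hX := ih hj
    simp only [Aminus, Pi.smul_apply, smul_eq_mul, Matrix.mulVec, dotProduct,
      Fin.sum_univ_two]
    rw [map_mul, map_add, map_mul, map_mul, hc10, hc11]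
    rw [map_mul, map_add, map_mul, map_mul, hc00, hc01]
    have hcast : ((q (j+1) / q 0 : ℝ) : ℂ) = (q (j+1) : ℂ) / (q 0 : ℂ) := by push_cast; ring
    have hcast2 : ((q j / q 0 : ℝ) : ℂ) = (q j : ℂ) / (q 0 : ℂ) := by push_cast; ring
    rw [hcast]
    rw [hcast2] at hX
    have hconjinv : (starRingEnd ℂ) ((2:ℂ)⁻¹) = (2:ℂ)⁻¹ := by
      rw [show ((2:ℂ)⁻¹) = (((2:ℝ)⁻¹ : ℝ) : ℂ) by norm_num, Complex.conj_ofReal]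
    rw [hconjinv]
    have hfix : (q j : ℂ) * ((q j : ℂ))⁻¹ = 1 := mul_inv_cancel₀ hqj
    linear_combination ((4:ℂ)⁻¹ * ((starRingEnd ℂ) (Aminus xs q j ζ 1) * Aminus xs q j ζ 1
        - (starRingEnd ℂ) (Aminus xs q j ζ 0) * Aminus xs q j ζ 0)) * hdet
      + ((q (j+1) : ℂ) / (q j : ℂ)) * hX
      + ((q (j+1) : ℂ) / (q 0 : ℂ)) * hfix
lemma Aplus_step (xs q : ℕ → ℝ) (N j : ℕ) (hj : j < N) (ζ : ℝ)
    (hdet : (Lmat xs q (j + 1) ζ).det ≠ 0) :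
    (Lmat xs q (j + 1) (ζ : ℂ)).mulVec (Aplus xs q N j ζ) = (2 : ℂ) • Aplus xs q N (j + 1) ζ := by
  have h1 : N - j = (N - (j + 1)) + 1 := by omega
  have h2 : N - (N - (j + 1)) = j + 1 := by omega
  have hP : Aplus xs q N j ζ
      = (2 : ℂ) • ((Lmat xs q (j + 1) ζ)⁻¹).mulVec (Aplus xs q N (j + 1) ζ) := by
    rw [Aplus, h1]
    show (2 : ℂ) • ((Lmat xs q (N - (N - (j+1))) ζ)⁻¹).mulVec (AplusAux xs q N (N - (j+1)) ζ) = _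
    rw [h2]; rfl
  rw [hP, Matrix.mulVec_smul, Matrix.mulVec_mulVec,
    Matrix.mul_nonsing_inv _ (isUnit_iff_ne_zero.mpr hdet), Matrix.one_mulVec]
lemma w_step (xs q : ℕ → ℝ) (N j : ℕ) (hj : j < N) (ζ : ℝ)
    (hdet : (Lmat xs q (j + 1) ζ).det ≠ 0) :
    Aplus xs q N (j+1) ζ 0 * Aminus xs q (j+1) ζ 1 - Aminus xs q (j+1) ζ 0 * Aplus xs q N (j+1) ζ 1
      = ((q (j+1) : ℂ) / (q j : ℂ)) *
        (Aplus xs q N j ζ 0 * Aminus xs q j ζ 1 - Aminus xs q j ζ 0 * Aplus xs q N j ζ 1) := by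
  have hstep := Aplus_step xs q N j hj ζ hdet
  have h0 := congrFun hstep 0
  have h1 := congrFun hstep 1
  simp only [Matrix.mulVec, dotProduct, Fin.sum_univ_two, Pi.smul_apply,
    smul_eq_mul] at h0 h1
  have hp0 : Aplus xs q N (j+1) ζ 0 = (2:ℂ)⁻¹ *
      (Lmat xs q (j+1) ζ 0 0 * Aplus xs q N j ζ 0 + Lmat xs q (j+1) ζ 0 1 * Aplus xs q N j ζ 1) := by
    linear_combination -(2:ℂ)⁻¹ * h0
  have hp1 : Aplus xs q N (j+1) ζ 1 = (2:ℂ)⁻¹ *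
      (Lmat xs q (j+1) ζ 1 0 * Aplus xs q N j ζ 0 + Lmat xs q (j+1) ζ 1 1 * Aplus xs q N j ζ 1) := by
    linear_combination -(2:ℂ)⁻¹ * h1
  have hD := Lmat_entry_det xs q (j + 1) (ζ : ℂ)
  rw [Nat.add_sub_cancel] at hD
  simp only [Aminus, Matrix.mulVec, dotProduct, Fin.sum_univ_two, Pi.smul_apply,
    smul_eq_mul]
  rw [hp0, hp1]
  linear_combination ((4:ℂ)⁻¹ * (Aplus xs q N j ζ 0 * Aminus xs q j ζ 1
    - Aminus xs q j ζ 0 * Aplus xs q N j ζ 1)) * hD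

/-- For every `j ∈ {0, …, N}` and real `ζ`, the determinant
`a_j^+(ζ) b_j^-(ζ) - a_j^-(ζ) b_j^+(ζ)` of the matrix with columns `A_j^+(ζ)` and
`A_j^-(ζ)` is nonzero. -/
theorem Avec_det_ne_zero (N : ℕ) (hN : 1 ≤ N) (xs q : ℕ → ℝ)
    (hxs : ∀ j : ℕ, 1 ≤ j → j < N → xs j < xs (j + 1))
    (hq : ∀ j : ℕ, j ≤ N → 0 < q j)
    (j : ℕ) (hjN : j ≤ N) (ζ : ℝ) :
    Aplus xs q N j ζ 0 * Aminus xs q j ζ 1 - Aminus xs q j ζ 0 * Aplus xs q N j ζ 1 ≠ 0 := by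
  have hq0 : (0:ℝ) < q 0 := hq 0 (Nat.zero_le N)
  have hwN : Aplus xs q N N ζ 0 * Aminus xs q N ζ 1
      - Aminus xs q N ζ 0 * Aplus xs q N N ζ 1 ≠ 0 := by
    have hPN : Aplus xs q N N ζ = ![1, 0] := by
      rw [Aplus, Nat.sub_self]; rfl
    rw [hPN]
    simp only [Matrix.cons_val_zero, Matrix.cons_val_one, Matrix.head_cons, one_mul,
      mul_zero, sub_zero]
    intro hb
    have hnorm := Aminus_norm xs q N hq ζ N le_rfl
    rw [hb, mul_zero] at hnorm
    have ha : (starRingEnd ℂ) (Aminus xs q N ζ 0) * Aminus xs q N ζ 0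
        = ((Complex.normSq (Aminus xs q N ζ 0) : ℝ) : ℂ) := by
      rw [mul_comm, Complex.mul_conj]
    rw [ha, zero_sub, ← Complex.ofReal_neg] at hnorm
    have hre := Complex.ofReal_inj.mp hnorm
    have hpos : 0 < q N / q 0 := div_pos (hq N le_rfl) hq0
    nlinarith [Complex.normSq_nonneg (Aminus xs q N ζ 0)]
  have key : ∀ k : ℕ, k ≤ N →
      Aplus xs q N (N - k) ζ 0 * Aminus xs q (N - k) ζ 1
        - Aminus xs q (N - k) ζ 0 * Aplus xs q N (N - k) ζ 1 ≠ 0 := by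
    intro k
    induction k with
    | zero => intro _; simpa using hwN
    | succ k ihk =>
      intro hk
      have hk' : k ≤ N := Nat.le_of_succ_le hk
      have hi : N - (k + 1) < N := by omega
      have hi1 : N - (k + 1) + 1 = N - k := by omega
      have hdet : (Lmat xs q (N - (k + 1) + 1) (ζ : ℂ)).det ≠ 0 := by
        rw [Lmat_det, Nat.add_sub_cancel]
        have h1 : (q (N - (k+1) + 1) : ℂ) ≠ 0 := Complex.ofReal_ne_zero.mpr
          (hq _ (by omega)).ne'
        have h2 : (q (N - (k+1)) : ℂ) ≠ 0 := Complex.ofReal_ne_zero.mpr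
          (hq _ (by omega)).ne'
        exact mul_ne_zero (by norm_num) (div_ne_zero h1 h2)
      have hw := w_step xs q N (N - (k + 1)) hi ζ hdet
      rw [hi1] at hw
      intro h0
      apply ihk hk'
      rw [hw, h0, mul_zero]
  have := key (N - j) (by omega)
  rwa [show N - (N - j) = j by omega] at this
end

section
/- Let c > 0 and let φ ∈ L²(ℝ;ℂ). If Π_c φ(x) = 0 for every x < 0, then Π_c φ(x) = 0 for every x ∈ ℝ. -/
open MeasureTheory Complex Metric Filter Set
open scoped Topology ENNReal

/-- `sinc t = sin t / t` for `t ≠ 0`, `sinc 0 = 1`. -/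
noncomputable def sinc (t : ℝ) : ℝ := if t = 0 then 1 else Real.sin t / t

/-- The orthogonal projection of `L²(ℝ)` onto the Paley–Wiener space `PW_c(ℝ)`,
evaluated pointwise: `Π_c φ(x) = (c/π) ∫ sinc(c(x - y)) φ(y) dy`. -/
noncomputable def PiProj (c : ℝ) (φ : ℝ → ℂ) (x : ℝ) : ℂ :=
  ((c / Real.pi : ℝ) : ℂ) * ∫ y : ℝ, ((sinc (c * (x - y)) : ℝ) : ℂ) * φ y

/-- Complex sinc. -/
noncomputable def csinc (w : ℂ) : ℂ := if w = 0 then 1 else Complex.sin w / w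

lemma csinc_ofReal (r : ℝ) : csinc (r : ℂ) = ((sinc r : ℝ) : ℂ) := by
  unfold csinc sinc
  by_cases h : r = 0
  · simp [h]
  · rw [if_neg (by exact_mod_cast h), if_neg h]
    push_cast [Complex.ofReal_sin]
    ring

lemma csinc_eventuallyEq {w : ℂ} (hw : w ≠ 0) :
    csinc =ᶠ[𝓝 w] fun z => Complex.sin z / z := by
  filter_upwards [isOpen_ne.mem_nhds hw] with z hz
  simp [csinc, hz]

lemma hasDerivAt_csinc {w : ℂ} (hw : w ≠ 0) :
    HasDerivAt csinc (Complex.cos w / w - Complex.sin w / w ^ 2) w := by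
  have h := (Complex.hasDerivAt_sin w).div (hasDerivAt_id w) hw
  have h2 : (Complex.cos w * w - Complex.sin w * 1) / w ^ 2
      = Complex.cos w / w - Complex.sin w / w ^ 2 := by
    field_simp
  simp only [id_eq] at h
  rw [h2] at h
  exact h.congr_of_eventuallyEq (csinc_eventuallyEq hw)

lemma deriv_csinc {w : ℂ} (hw : w ≠ 0) :
    deriv csinc w = Complex.cos w / w - Complex.sin w / w ^ 2 :=
  (hasDerivAt_csinc hw).deriv

lemma continuousAt_csinc_zero : ContinuousAt csinc 0 := by
  rw [← continuousWithinAt_compl_self]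
  have h1 : Tendsto (fun w : ℂ => Complex.sin w / w) (𝓝[≠] 0) (𝓝 1) := by
    have h := Complex.hasDerivAt_sin 0
    rw [hasDerivAt_iff_tendsto_slope] at h
    simp only [Complex.cos_zero] at h
    refine h.congr (fun w => ?_)
    simp [slope_def_field, Complex.sin_zero, div_eq_mul_inv, mul_comm]
  have h2 : csinc 0 = 1 := by simp [csinc]
  rw [ContinuousWithinAt, h2]
  refine h1.congr' ?_
  filter_upwards [self_mem_nhdsWithin] with w hw
  simp only [mem_compl_iff, mem_singleton_iff] at hw
  simp [csinc, hw]

lemma differentiable_csinc : Differentiable ℂ csinc := by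
  intro w
  by_cases hw : w = 0
  · subst hw
    refine (Complex.analyticAt_of_differentiable_on_punctured_nhds_of_continuousAt ?_
      continuousAt_csinc_zero).differentiableAt
    filter_upwards [self_mem_nhdsWithin] with z hz
    exact (hasDerivAt_csinc hz).differentiableAt
  · exact (hasDerivAt_csinc hw).differentiableAt

lemma continuous_csinc : Continuous csinc := differentiable_csinc.continuous

lemma continuous_deriv_csinc : Continuous (deriv csinc) := by
  have h : AnalyticOnNhd ℂ csinc univ := fun z _ => differentiable_csinc.analyticAt z
  have h2 := h.deriv
  rw [continuous_iff_continuousAt]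
  exact fun z => (h2 z (mem_univ z)).continuousAt

lemma abs_sin_le (w : ℂ) : ‖Complex.sin w‖ ≤ Real.exp |w.im| := by
  have h : Complex.sin w = (Complex.exp (-w * I) - Complex.exp (w * I)) * I / 2 := rfl
  rw [h]
  have h1 : ‖(Complex.exp (-w * I) - Complex.exp (w * I)) * I / 2‖
      = ‖Complex.exp (-w * I) - Complex.exp (w * I)‖ / 2 := by
    simp [norm_div, norm_mul]
  rw [h1]
  have h2 : ‖Complex.exp (-w * I)‖ = Real.exp w.im := by
    rw [Complex.norm_exp]
    congr 1
    simp
  have h3 : ‖Complex.exp (w * I)‖ = Real.exp (-w.im) := by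
    rw [Complex.norm_exp]
    congr 1
    simp
  have h4 := norm_sub_le (Complex.exp (-w * I)) (Complex.exp (w * I))
  have h5 : Real.exp w.im ≤ Real.exp |w.im| := Real.exp_le_exp.mpr (le_abs_self _)
  have h6 : Real.exp (-w.im) ≤ Real.exp |w.im| := Real.exp_le_exp.mpr (neg_le_abs _)
  rw [h2, h3] at h4
  linarith

lemma abs_cos_le (w : ℂ) : ‖Complex.cos w‖ ≤ Real.exp |w.im| := by
  have h : Complex.cos w = (Complex.exp (w * I) + Complex.exp (-w * I)) / 2 := rfl
  rw [h]
  have h1 : ‖(Complex.exp (w * I) + Complex.exp (-w * I)) / 2‖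
      = ‖Complex.exp (w * I) + Complex.exp (-w * I)‖ / 2 := by
    simp [norm_div]
  rw [h1]
  have h2 : ‖Complex.exp (-w * I)‖ = Real.exp w.im := by
    rw [Complex.norm_exp]
    congr 1
    simp
  have h3 : ‖Complex.exp (w * I)‖ = Real.exp (-w.im) := by
    rw [Complex.norm_exp]
    congr 1
    simp
  have h4 := norm_add_le (Complex.exp (w * I)) (Complex.exp (-w * I))
  have h5 : Real.exp w.im ≤ Real.exp |w.im| := Real.exp_le_exp.mpr (le_abs_self _)
  have h6 : Real.exp (-w.im) ≤ Real.exp |w.im| := Real.exp_le_exp.mpr (neg_le_abs _)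
  rw [h2, h3] at h4
  linarith

/-- Uniform bound on `csinc` and its derivative in a horizontal strip, with `1/(1+|Re w|)` decay. -/
lemma csinc_bound (M : ℝ) : ∃ C : ℝ, 0 < C ∧ ∀ w : ℂ, |w.im| ≤ M →
    ‖csinc w‖ ≤ C / (1 + |w.re|) ∧ ‖deriv csinc w‖ ≤ C / (1 + |w.re|) := by
  obtain ⟨w₀, -, hw₀'⟩ := (isCompact_closedBall (0 : ℂ) 1).exists_isMaxOn
    ⟨0, mem_closedBall_self one_pos.le⟩
    ((continuous_csinc.norm.add continuous_deriv_csinc.norm).continuousOn)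
  have hw₀ : ∀ w ∈ closedBall (0:ℂ) 1, ‖csinc w‖ + ‖deriv csinc w‖ ≤ ‖csinc w₀‖ + ‖deriv csinc w₀‖ :=
    fun w hw => hw₀' hw
  set B : ℝ := ‖csinc w₀‖ + ‖deriv csinc w₀‖ with hB
  have hB0 : 0 ≤ B := by positivity
  refine ⟨2 * max (B + 1) (2 * Real.exp M), by positivity, fun w hw => ?_⟩
  have hre : |w.re| ≤ ‖w‖ := Complex.abs_re_le_norm w
  have him : |w.im| ≤ ‖w‖ := Complex.abs_im_le_norm w
  have hrepos : (0:ℝ) < 1 + |w.re| := by positivity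
  rcases le_or_gt ‖w‖ 1 with hw1 | hw1
  · -- small w : use compact bound
    have hmem : w ∈ closedBall (0 : ℂ) 1 := by
      simpa [mem_closedBall, dist_zero_right] using hw1
    have hbd := hw₀ w hmem
    have hd1 : 1 + |w.re| ≤ 2 := by linarith [hre.trans hw1]
    have key : B + 1 ≤ 2 * max (B + 1) (2 * Real.exp M) / (1 + |w.re|) := by
      rw [le_div_iff₀ hrepos]
      have : B + 1 ≤ max (B + 1) (2 * Real.exp M) := le_max_left _ _
      nlinarith [le_max_left (B + 1) (2 * Real.exp M)]
    constructor
    · refine le_trans ?_ key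
      have := norm_nonneg (deriv csinc w)
      linarith
    · refine le_trans ?_ key
      have := norm_nonneg (csinc w)
      linarith
  · -- large w
    have hw0 : w ≠ 0 := by
      intro h; rw [h] at hw1; simp at hw1; linarith
    have hwpos : (0:ℝ) < ‖w‖ := by linarith
    have hexp : (0:ℝ) < Real.exp M := Real.exp_pos M
    have hsin : ‖Complex.sin w‖ ≤ Real.exp M :=
      (abs_sin_le w).trans (Real.exp_le_exp.mpr hw)
    have hcos : ‖Complex.cos w‖ ≤ Real.exp M :=
      (abs_cos_le w).trans (Real.exp_le_exp.mpr hw)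
    have hkey : 2 * Real.exp M / ‖w‖ ≤ 2 * max (B + 1) (2 * Real.exp M) / (1 + |w.re|) := by
      rw [div_le_div_iff₀ hwpos hrepos]
      have h1 : 1 + |w.re| ≤ 2 * ‖w‖ := by linarith
      have h2 : 2 * Real.exp M ≤ max (B + 1) (2 * Real.exp M) := le_max_right _ _
      nlinarith
    constructor
    · refine le_trans ?_ hkey
      have : ‖csinc w‖ = ‖Complex.sin w‖ / ‖w‖ := by
        simp [csinc, hw0, norm_div]
      rw [this]
      rw [div_le_div_iff₀ hwpos hwpos]
      nlinarith
    · refine le_trans ?_ hkey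
      rw [deriv_csinc hw0]
      have h1 : ‖Complex.cos w / w - Complex.sin w / w ^ 2‖
          ≤ ‖Complex.cos w‖ / ‖w‖ + ‖Complex.sin w‖ / ‖w‖ ^ 2 := by
        refine (norm_sub_le _ _).trans ?_
        simp [norm_div, norm_pow]
      refine h1.trans ?_
      have hw2 : ‖w‖ ≤ ‖w‖ ^ 2 := by nlinarith
      have hs1 : ‖Complex.sin w‖ / ‖w‖ ^ 2 ≤ Real.exp M / ‖w‖ := by
        rw [div_le_div_iff₀ (by nlinarith) hwpos]
        nlinarith [norm_nonneg (Complex.sin w)]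
      have hc1 : ‖Complex.cos w‖ / ‖w‖ ≤ Real.exp M / ‖w‖ := by
        gcongr
      have : Real.exp M / ‖w‖ + Real.exp M / ‖w‖ = 2 * Real.exp M / ‖w‖ := by ring
      linarith

lemma g_memℒp : MemLp (fun y : ℝ => (Real.sqrt (1 + y ^ 2))⁻¹) 2 volume := by
  have hcont : Continuous fun y : ℝ => (Real.sqrt (1 + y ^ 2))⁻¹ := by
    refine (Real.continuous_sqrt.comp (by continuity)).inv₀ ?_
    intro y
    have : (0:ℝ) < Real.sqrt (1 + y ^ 2) := Real.sqrt_pos.mpr (by positivity)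
    exact this.ne'
  rw [memLp_two_iff_integrable_sq hcont.aestronglyMeasurable]
  refine integrable_inv_one_add_sq.congr (Eventually.of_forall fun y => ?_)
  show (1 + y ^ 2)⁻¹ = ((Real.sqrt (1 + y ^ 2))⁻¹) ^ 2
  rw [inv_pow, Real.sq_sqrt (by positivity : (0:ℝ) ≤ 1 + y ^ 2)]

lemma differentiable_intF (c : ℝ) (hc : 0 < c) (φ : ℝ → ℂ) (hφ2 : MemLp φ 2 volume) :
    Differentiable ℂ (fun z : ℂ => ∫ y : ℝ, csinc ((c : ℂ) * (z - (y : ℂ))) * φ y) := by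
  intro z₀
  obtain ⟨C, hC, hCb⟩ := csinc_bound (c * (‖z₀‖ + 1))
  set A : ℝ := max (2 + ‖z₀‖) c⁻¹ with hA
  have hA0 : 0 < A := lt_of_lt_of_le (by positivity) (le_max_left _ _)
  have hA1 : 2 + ‖z₀‖ ≤ A := le_max_left _ _
  have hAc : 1 ≤ A * c := by
    have h1 : c⁻¹ ≤ A := le_max_right _ _
    calc (1:ℝ) = c⁻¹ * c := by field_simp
    _ ≤ A * c := by gcongr
  set g : ℝ → ℝ := fun y => (Real.sqrt (1 + y ^ 2))⁻¹ with hg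
  have hgpos : ∀ y : ℝ, 0 < g y := fun y =>
    inv_pos.mpr (Real.sqrt_pos.mpr (by positivity))
  have hgmem : MemLp g 2 volume := g_memℒp
  have hφg : Integrable (fun y => g y • φ y) volume := by
    have hpqr : (1 : ℝ≥0∞) / 1 = 1 / 2 + 1 / 2 := by
      rw [ENNReal.add_halves, one_div_one]
    exact memLp_one_iff_integrable.mp (hφ2.smul hgmem (hpqr := ⟨by rw [inv_one]; exact ENNReal.inv_two_add_inv_two⟩))
  have hbint : Integrable (fun y => g y * ‖φ y‖) volume := by
    refine hφg.norm.congr (Eventually.of_forall fun y => ?_)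
    show ‖g y • φ y‖ = g y * ‖φ y‖
    rw [norm_smul, Real.norm_eq_abs, abs_of_pos (hgpos y)]
  have hcre : ∀ (z : ℂ) (y : ℝ), ((c:ℂ) * (z - (y:ℂ))).re = c * (z.re - y) := by
    intro z y; simp [Complex.mul_re]
  have hcim : ∀ (z : ℂ) (y : ℝ), ((c:ℂ) * (z - (y:ℂ))).im = c * z.im := by
    intro z y; simp [Complex.mul_im]
  have hznorm : ∀ z ∈ ball z₀ (1:ℝ), ‖z‖ ≤ ‖z₀‖ + 1 := by
    intro z hz
    have h1 : ‖z - z₀‖ < 1 := by simpa [dist_eq_norm] using mem_ball.mp hz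
    calc ‖z‖ = ‖z₀ + (z - z₀)‖ := by ring_nf
    _ ≤ ‖z₀‖ + ‖z - z₀‖ := norm_add_le _ _
    _ ≤ ‖z₀‖ + 1 := by linarith
  have hstrip : ∀ z ∈ ball z₀ (1:ℝ), ∀ y : ℝ,
      |((c:ℂ) * (z - (y:ℂ))).im| ≤ c * (‖z₀‖ + 1) := by
    intro z hz y
    rw [hcim, abs_mul, abs_of_pos hc]
    have h1 : |z.im| ≤ ‖z‖ := Complex.abs_im_le_norm z
    have h2 := hznorm z hz
    gcongr
    linarith
  have hkey : ∀ z ∈ ball z₀ (1:ℝ), ∀ y : ℝ,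
      C / (1 + |((c:ℂ) * (z - (y:ℂ))).re|) ≤ C * A * g y := by
    intro z hz y
    rw [hcre]
    have hs : (0:ℝ) < Real.sqrt (1 + y ^ 2) := Real.sqrt_pos.mpr (by positivity)
    have hsqrt : Real.sqrt (1 + y ^ 2) ≤ 1 + |y| := by
      have h1 : Real.sqrt (1 + y ^ 2) ≤ Real.sqrt ((1 + |y|) ^ 2) :=
        Real.sqrt_le_sqrt (by nlinarith [abs_nonneg y, _root_.sq_abs y])
      rwa [Real.sqrt_sq (by positivity)] at h1
    have hy : |y| ≤ |z.re| + |z.re - y| := by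
      calc |y| = |z.re + (y - z.re)| := by congr 1; ring
      _ ≤ |z.re| + |y - z.re| := abs_add_le _ _
      _ = |z.re| + |z.re - y| := by rw [abs_sub_comm]
    have hzre : |z.re| ≤ ‖z₀‖ + 1 := (Complex.abs_re_le_norm z).trans (hznorm z hz)
    have habs : |c * (z.re - y)| = c * |z.re - y| := by rw [abs_mul, abs_of_pos hc]
    have h1 : Real.sqrt (1 + y ^ 2) ≤ A * (1 + |c * (z.re - y)|) := by
      rw [habs]
      have h2 : |z.re - y| ≤ A * c * |z.re - y| :=
        le_mul_of_one_le_left (abs_nonneg _) hAc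
      nlinarith [abs_nonneg (z.re - y)]
    have h2 : C / (1 + |c * (z.re - y)|) ≤ C * A / Real.sqrt (1 + y ^ 2) := by
      rw [div_le_div_iff₀ (by positivity) hs]
      nlinarith [mul_le_mul_of_nonneg_left h1 hC.le]
    calc C / (1 + |c * (z.re - y)|) ≤ C * A / Real.sqrt (1 + y ^ 2) := h2
    _ = C * A * g y := div_eq_mul_inv _ _
  have est1 : ∀ z ∈ ball z₀ (1:ℝ), ∀ y : ℝ,
      ‖csinc ((c:ℂ) * (z - (y:ℂ))) * φ y‖ ≤ C * A * (g y * ‖φ y‖) := by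
    intro z hz y
    rw [norm_mul]
    have h2 := ((hCb _ (hstrip z hz y)).1).trans (hkey z hz y)
    calc ‖csinc ((c:ℂ) * (z - (y:ℂ)))‖ * ‖φ y‖ ≤ (C * A * g y) * ‖φ y‖ :=
      mul_le_mul_of_nonneg_right h2 (norm_nonneg _)
    _ = C * A * (g y * ‖φ y‖) := by ring
  have est2 : ∀ z ∈ ball z₀ (1:ℝ), ∀ y : ℝ,
      ‖(deriv csinc ((c:ℂ) * (z - (y:ℂ))) * (c:ℂ)) * φ y‖
        ≤ (c * (C * A)) * (g y * ‖φ y‖) := by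
    intro z hz y
    have h2 := ((hCb _ (hstrip z hz y)).2).trans (hkey z hz y)
    have hnc : ‖(c:ℂ)‖ = c := by
      rw [Complex.norm_real, Real.norm_eq_abs, abs_of_pos hc]
    calc ‖(deriv csinc ((c:ℂ) * (z - (y:ℂ))) * (c:ℂ)) * φ y‖
        = ‖deriv csinc ((c:ℂ) * (z - (y:ℂ)))‖ * c * ‖φ y‖ := by
          rw [norm_mul, norm_mul, hnc]
    _ ≤ (C * A * g y) * c * ‖φ y‖ := by
          have := mul_le_mul_of_nonneg_right
            (mul_le_mul_of_nonneg_right h2 hc.le) (norm_nonneg (φ y))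
          linarith
    _ = (c * (C * A)) * (g y * ‖φ y‖) := by ring
  have hcontaff : ∀ z : ℂ, Continuous fun y : ℝ => (c:ℂ) * (z - (y:ℂ)) :=
    fun z => continuous_const.mul (continuous_const.sub Complex.continuous_ofReal)
  have hmeasz : ∀ z : ℂ,
      AEStronglyMeasurable (fun y : ℝ => csinc ((c:ℂ) * (z - (y:ℂ))) * φ y) volume :=
    fun z => (continuous_csinc.comp (hcontaff z)).aestronglyMeasurable.mul hφ2.1
  have hF'meas : AEStronglyMeasurable
      (fun y : ℝ => (deriv csinc ((c:ℂ) * (z₀ - (y:ℂ))) * (c:ℂ)) * φ y) volume :=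
    (((continuous_deriv_csinc.comp (hcontaff z₀)).mul continuous_const).aestronglyMeasurable).mul
      hφ2.1
  have hFint : Integrable (fun y : ℝ => csinc ((c:ℂ) * (z₀ - (y:ℂ))) * φ y) volume := by
    refine (hbint.const_mul (C * A)).mono' (hmeasz z₀) (Eventually.of_forall fun y => ?_)
    simpa [mul_assoc] using est1 z₀ (mem_ball_self one_pos) y
  have hder : ∀ (y : ℝ) (z : ℂ),
      HasDerivAt (fun z : ℂ => csinc ((c:ℂ) * (z - (y:ℂ))) * φ y)
        ((deriv csinc ((c:ℂ) * (z - (y:ℂ))) * (c:ℂ)) * φ y) z := by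
    intro y z
    have h1 : HasDerivAt (fun z : ℂ => (c:ℂ) * (z - (y:ℂ))) (c:ℂ) z := by
      simpa using ((hasDerivAt_id z).sub_const ((y:ℝ):ℂ)).const_mul (c:ℂ)
    have h2 : HasDerivAt csinc (deriv csinc ((c:ℂ) * (z - (y:ℂ)))) ((c:ℂ) * (z - (y:ℂ))) :=
      (differentiable_csinc _).hasDerivAt
    exact (h2.comp z h1).mul_const (φ y)
  have main := hasDerivAt_integral_of_dominated_loc_of_deriv_le (μ := volume)
      (F := fun (z : ℂ) (y : ℝ) => csinc ((c:ℂ) * (z - (y:ℂ))) * φ y)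
      (F' := fun (z : ℂ) (y : ℝ) => (deriv csinc ((c:ℂ) * (z - (y:ℂ))) * (c:ℂ)) * φ y)
      (x₀ := z₀) (bound := fun y => (c * (C * A)) * (g y * ‖φ y‖)) (ball_mem_nhds z₀ one_pos)
      (Eventually.of_forall fun z => hmeasz z) hFint hF'meas
      (Eventually.of_forall fun y z hz => est2 z hz y)
      (hbint.const_mul _)
      (Eventually.of_forall fun y z _ => hder y z)
  exact main.2.differentiableAt

/-- `Π_c φ` extends to an entire function: if it vanishes on the negative half-line,
it vanishes identically. -/
theorem piProj_eq_zero_of_neg (c : ℝ) (hc : 0 < c) (φ : ℝ → ℂ)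
    (hφ2 : MeasureTheory.MemLp φ 2 MeasureTheory.volume)
    (h : ∀ x : ℝ, x < 0 → PiProj c φ x = 0) :
    ∀ x : ℝ, PiProj c φ x = 0 := by
  set F : ℂ → ℂ := fun z : ℂ => ∫ y : ℝ, csinc ((c : ℂ) * (z - (y : ℂ))) * φ y with hFdef
  have hdiff : Differentiable ℂ F := differentiable_intF c hc φ hφ2
  have hreal : ∀ x : ℝ, PiProj c φ x = ((c / Real.pi : ℝ) : ℂ) * F ((x : ℝ) : ℂ) := by
    intro x
    unfold PiProj
    rw [hFdef]
    congr 1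
    refine integral_congr_ae (Eventually.of_forall fun y => ?_)
    show ((sinc (c * (x - y)) : ℝ) : ℂ) * φ y = csinc ((c:ℂ) * (((x:ℝ):ℂ) - ((y:ℝ):ℂ))) * φ y
    rw [show ((c:ℂ) * (((x:ℝ):ℂ) - ((y:ℝ):ℂ))) = ((c * (x - y) : ℝ) : ℂ) by push_cast; ring,
      csinc_ofReal]
  have hc0 : ((c / Real.pi : ℝ) : ℂ) ≠ 0 := by
    simp only [ne_eq, Complex.ofReal_eq_zero]
    exact div_ne_zero hc.ne' Real.pi_ne_zero
  have hFzero : ∀ x : ℝ, x < 0 → F ((x : ℝ) : ℂ) = 0 := by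
    intro x hx
    have h1 := h x hx
    rw [hreal x] at h1
    exact (mul_eq_zero.mp h1).resolve_left hc0
  have hfreq : ∃ᶠ z in 𝓝[≠] (-1 : ℂ), F z = 0 := by
    have htend : Tendsto (fun n : ℕ => ((-1 - ((n:ℝ) + 1)⁻¹ : ℝ) : ℂ)) atTop
        (𝓝[≠] (-1 : ℂ)) := by
      rw [tendsto_nhdsWithin_iff]
      constructor
      · have h3 : Tendsto (fun n : ℕ => (((n:ℝ) + 1)⁻¹ : ℝ)) atTop (𝓝 0) := by
          simpa [one_div] using tendsto_one_div_add_atTop_nhds_zero_nat (𝕜 := ℝ)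
        have h2 : Tendsto (fun n : ℕ => (-1 - ((n:ℝ) + 1)⁻¹ : ℝ)) atTop (𝓝 (-1)) := by
          simpa using tendsto_const_nhds.sub h3
        have h4 := (Complex.continuous_ofReal.tendsto (-1 : ℝ)).comp h2
        simpa [Function.comp_def] using h4
      · filter_upwards with n
        simp only [mem_compl_iff, mem_singleton_iff]
        intro hcontra
        have h5 : ((-1 - ((n:ℝ) + 1)⁻¹ : ℝ) : ℂ) = ((-1 : ℝ) : ℂ) := by
          rw [hcontra]; norm_num
        have h6 : (-1 - ((n:ℝ) + 1)⁻¹ : ℝ) = -1 := Complex.ofReal_inj.mp h5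
        have h7 : (0:ℝ) < ((n:ℝ) + 1)⁻¹ := inv_pos.mpr (by positivity)
        linarith
    refine htend.frequently (Frequently.of_forall fun n => ?_)
    refine hFzero _ ?_
    have h7 : (0:ℝ) < ((n:ℝ) + 1)⁻¹ := inv_pos.mpr (by positivity)
    linarith
  have hanal : AnalyticOnNhd ℂ F univ := fun z _ => hdiff.analyticAt z
  have hEq := hanal.eqOn_zero_of_preconnected_of_frequently_eq_zero isPreconnected_univ
    (mem_univ (-1 : ℂ)) hfreq
  intro x
  rw [hreal x, hEq (mem_univ ((x : ℝ) : ℂ))]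
  simp
end
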